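/- For every integer d ≥ 2, there do not exist ⌊d/2⌋+1 pairwise disjoint sets A₁, …, A_{⌊d/2⌋+1} of points of d-dimensional Euclidean space, each of cardinality 3, such that for all i ≠ j, every point of A_i is at Euclidean distance exactly 1 from every point of A_j. Equivalently, no distance graph in ℝ^d contains a subgraph isomorphic to the complete (⌊d/2⌋+1)-partite graph K_{3,…,3} with all parts of size 3. -/

import Mathlib

open RealInnerProductSpace Finset

section aux
variable {E : Type*} [NormedAddCommGroup E] [InnerProductSpace ℝ E]

lemma cross_orth {x x' y y' : E}
    (h1 : dist x y = 1) (h2 : dist x y' = 1) (h3 : dist x' y = 1) (h4 : dist x' y' = 1) :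
    ⟪x - x', y - y'⟫ = 0 := by
  have e1 : ‖x - y‖ ^ 2 = 1 := by rw [← dist_eq_norm, h1]; norm_num
  have e2 : ‖x - y'‖ ^ 2 = 1 := by rw [← dist_eq_norm, h2]; norm_num
  have e3 : ‖x' - y‖ ^ 2 = 1 := by rw [← dist_eq_norm, h3]; norm_num
  have e4 : ‖x' - y'‖ ^ 2 = 1 := by rw [← dist_eq_norm, h4]; norm_num
  have n : ∀ u v : E, ‖u - v‖ ^ 2 = ‖u‖ ^ 2 - 2 * ⟪u, v⟫ + ‖v‖ ^ 2 := fun u v => by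
    rw [norm_sub_sq_real]
  rw [n] at e1 e2 e3 e4
  have : ⟪x - x', y - y'⟫ = ⟪x, y⟫ - ⟪x, y'⟫ - ⟪x', y⟫ + ⟪x', y'⟫ := by
    simp [inner_sub_left, inner_sub_right]; ring
  rw [this]; linarith

lemma block_indep {a b c y : E} (hab : a ≠ b) (hac : a ≠ c) (hbc : b ≠ c)
    (h1 : dist a y = 1) (h2 : dist b y = 1) (h3 : dist c y = 1)
    {α β : ℝ} (h : α • (b - a) + β • (c - a) = 0) : α = 0 ∧ β = 0 := by
  have hu : b - a ≠ 0 := sub_ne_zero.mpr hab.symm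
  by_cases hβ : β = 0
  · subst hβ
    simp only [zero_smul, add_zero] at h
    rcases smul_eq_zero.mp h with h | h
    · exact ⟨h, rfl⟩
    · exact absurd h hu
  · exfalso
    set t : ℝ := -α / β with ht
    have hv : c - a = t • (b - a) := by
      have h2' : β • (c - a) = (-α) • (b - a) := by
        rw [neg_smul]
        exact eq_neg_of_add_eq_zero_right h
      have h3' := congrArg (fun z => β⁻¹ • z) h2'
      simp only [smul_smul, inv_mul_cancel₀ hβ, one_smul] at h3'
      rw [h3', ht]
      congr 1
      field_simp
    -- squared distances
    have e1 : ‖a - y‖ ^ 2 = 1 := by rw [← dist_eq_norm, h1]; norm_num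
    have e2 : ‖(a - y) + (1:ℝ) • (b - a)‖ ^ 2 = 1 := by
      have : (a - y) + (1:ℝ) • (b - a) = b - y := by rw [one_smul]; abel
      rw [this, ← dist_eq_norm, h2]; norm_num
    have e3 : ‖(a - y) + t • (b - a)‖ ^ 2 = 1 := by
      have : (a - y) + t • (b - a) = c - y := by rw [← hv]; abel
      rw [this, ← dist_eq_norm, h3]; norm_num
    have exp2 : ∀ s : ℝ, ‖(a - y) + s • (b - a)‖ ^ 2
        = ‖a - y‖ ^ 2 + 2 * s * ⟪a - y, b - a⟫ + s ^ 2 * ‖b - a‖ ^ 2 := by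
      intro s
      rw [norm_add_sq_real, real_inner_smul_right, norm_smul]
      simp [mul_pow]
      ring
    rw [exp2] at e2 e3
    have hnu : ‖b - a‖ ^ 2 ≠ 0 := pow_ne_zero _ (norm_ne_zero_iff.mpr hu)
    have ht0 : t ≠ 0 := by
      intro h0
      rw [h0, zero_smul] at hv
      exact hac (by rwa [sub_eq_zero, eq_comm] at hv)
    have ht1 : t ≠ 1 := by
      intro h0
      rw [h0, one_smul] at hv
      exact hbc (sub_left_inj.mp hv).symm
    have key : t * (t - 1) * ‖b - a‖ ^ 2 = 0 := by
      linear_combination e3 - e1 - t * e2 + t * e1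
    rcases mul_eq_zero.mp key with h0 | h0
    · rcases mul_eq_zero.mp h0 with h0 | h0
      · exact ht0 h0
      · exact ht1 (by linarith)
    · exact hnu h0

end aux

theorem no_K33etc_in_distance_graph (d : ℕ) (hd : 2 ≤ d) :
    ¬ ∃ A : Fin (d / 2 + 1) → Finset (EuclideanSpace ℝ (Fin d)),
        (∀ i, (A i).card = 3) ∧
        (∀ i j, i ≠ j → Disjoint (A i) (A j)) ∧
        (∀ i j, i ≠ j → ∀ x ∈ A i, ∀ y ∈ A j, dist x y = 1) := by
  classical
  rintro ⟨A, hcard, hdisj, hdist⟩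
  have hpts : ∀ i, ∃ a b c : EuclideanSpace ℝ (Fin d),
      a ≠ b ∧ a ≠ c ∧ b ≠ c ∧ A i = {a, b, c} := by
    intro i
    exact Finset.card_eq_three.mp (hcard i)
  choose a b c hab hac hbc hA using hpts
  have ha : ∀ i, a i ∈ A i := fun i => by
    rw [hA i]; exact Finset.mem_insert_self _ _
  have hb : ∀ i, b i ∈ A i := fun i => by
    rw [hA i]
    exact Finset.mem_insert_of_mem (Finset.mem_insert_self _ _)
  have hc : ∀ i, c i ∈ A i := fun i => by
    rw [hA i]
    exact Finset.mem_insert_of_mem (Finset.mem_insert_of_mem (Finset.mem_singleton_self _))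
  have hother : ∀ i : Fin (d / 2 + 1), ∃ j, j ≠ i := by
    intro i
    by_cases h0 : i = ⟨0, by omega⟩
    · exact ⟨⟨1, by omega⟩, by subst h0; exact Fin.ne_of_val_ne (by norm_num)⟩
    · exact ⟨⟨0, by omega⟩, fun hji => h0 hji.symm⟩
  set u : Fin (d / 2 + 1) → EuclideanSpace ℝ (Fin d) := fun i => b i - a i with hu
  set v : Fin (d / 2 + 1) → EuclideanSpace ℝ (Fin d) := fun i => c i - a i with hv
  have horth : ∀ i j, i ≠ j → ∀ x ∈ A i, ∀ x' ∈ A i, ∀ y ∈ A j, ∀ y' ∈ A j,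
      ⟪x - x', y - y'⟫ = 0 := by
    intro i j hij x hx x' hx' y hy y' hy'
    exact cross_orth (hdist i j hij x hx y hy) (hdist i j hij x hx y' hy')
      (hdist i j hij x' hx' y hy) (hdist i j hij x' hx' y' hy')
  set W : Fin (d / 2 + 1) × Fin 2 → EuclideanSpace ℝ (Fin d) :=
    fun p => if p.2 = 0 then u p.1 else v p.1 with hW
  have hli : LinearIndependent ℝ W := by
    rw [Fintype.linearIndependent_iff]
    intro g hg
    set x : Fin (d / 2 + 1) → EuclideanSpace ℝ (Fin d) :=
      fun j => g (j, 0) • u j + g (j, 1) • v j with hx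
    have hsum : ∑ j, x j = 0 := by
      rw [← hg, Fintype.sum_prod_type]
      refine Finset.sum_congr rfl fun j _ => ?_
      rw [hx]
      simp [Fin.sum_univ_two, hW]
    have hxorth : ∀ i j, i ≠ j → ⟪x i, x j⟫ = 0 := by
      intro i j hij
      rw [hx]
      simp only [inner_add_left, inner_add_right, real_inner_smul_left, real_inner_smul_right,
        hu, hv]
      rw [horth i j hij _ (hb i) _ (ha i) _ (hb j) _ (ha j),
          horth i j hij _ (hb i) _ (ha i) _ (hc j) _ (ha j),
          horth i j hij _ (hc i) _ (ha i) _ (hb j) _ (ha j),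
          horth i j hij _ (hc i) _ (ha i) _ (hc j) _ (ha j)]
      ring
    have hxzero : ∀ j, x j = 0 := by
      have h0 : (0 : ℝ) = ∑ j, ⟪x j, x j⟫ := by
        have hz : ⟪∑ j, x j, ∑ j, x j⟫ = (0 : ℝ) := by rw [hsum]; simp
        rw [← hz, sum_inner]
        refine Finset.sum_congr rfl fun j _ => ?_
        rw [inner_sum, Finset.sum_eq_single j]
        · intro k _ hk
          exact hxorth j k (Ne.symm hk)
        · intro h; exact absurd (Finset.mem_univ j) h
      have hnn : ∀ j : Fin (d / 2 + 1), j ∈ Finset.univ → (0:ℝ) ≤ ⟪x j, x j⟫ :=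
        fun j _ => real_inner_self_nonneg
      intro j
      have := (Finset.sum_eq_zero_iff_of_nonneg hnn).mp h0.symm j (Finset.mem_univ j)
      exact inner_self_eq_zero.mp this
    intro p
    obtain ⟨j, k⟩ := p
    have hz := hxzero j
    rw [hx] at hz
    obtain ⟨jj, hjj⟩ := hother j
    have hbi := block_indep (hab j) (hac j) (hbc j)
      (hdist j jj (Ne.symm hjj) _ (ha j) _ (ha jj))
      (hdist j jj (Ne.symm hjj) _ (hb j) _ (ha jj))
      (hdist j jj (Ne.symm hjj) _ (hc j) _ (ha jj)) hz
    fin_cases k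
    · exact hbi.1
    · exact hbi.2
  have hcardle : Fintype.card (Fin (d / 2 + 1) × Fin 2)
      ≤ Module.finrank ℝ (EuclideanSpace ℝ (Fin d)) :=
    hli.fintype_card_le_finrank
  simp [finrank_euclideanSpace_fin] at hcardle
  omega
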